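/- In an error-free perfect secrecy system, the Shannon entropy of the ciphertext satisfies H(X) ≥ log|𝒰|, with equality if and only if X is uniformly distributed with P_X(x)=1/|𝒰| for all x in its support. -/

import Mathlib

open Finset

/-- Shannon entropy of a finitely supported probability mass function. -/
noncomputable def ent {α : Type*} [Fintype α] (q : α → ℝ) : ℝ :=
  ∑ a, Real.negMulLog (q a)

/-- Generic entropy lower bound: if a pmf is bounded above by `1/N`, its entropy is
at least `log N`, with equality iff every nonzero mass equals `1/N`. -/
lemma ent_ge_log_aux {𝒳 : Type*} [Fintype 𝒳] (q : 𝒳 → ℝ) (N : ℕ) (hN : 1 ≤ N)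
    (hq0 : ∀ x, 0 ≤ q x) (hq1 : ∑ x, q x = 1) (hub : ∀ x, q x ≤ 1 / N) :
    Real.log N ≤ ent q ∧ (ent q = Real.log N ↔ ∀ x, q x ≠ 0 → q x = 1 / N) := by
  have hNpos : (0:ℝ) < N := by exact_mod_cast hN
  set f : 𝒳 → ℝ := fun x => Real.negMulLog (q x) - q x * Real.log N with hf
  have hsumf : ∑ x, f x = ent q - Real.log N := by
    rw [Finset.sum_sub_distrib, ← Finset.sum_mul, hq1, one_mul]; rfl
  have hform : ∀ x, q x ≠ 0 → f x = q x * (-Real.log (q x * N)) := by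
    intro x hx
    have hxpos : 0 < q x := lt_of_le_of_ne (hq0 x) (Ne.symm hx)
    simp only [hf, Real.negMulLog, Real.log_mul hx (ne_of_gt hNpos)]
    ring
  have hfnn : ∀ x ∈ Finset.univ, 0 ≤ f x := by
    intro x _
    by_cases hx : q x = 0
    · simp [hf, hx]
    · rw [hform x hx]
      have hxpos : 0 < q x := lt_of_le_of_ne (hq0 x) (Ne.symm hx)
      have h1 : q x * N ≤ 1 := by
        calc q x * N ≤ 1 / N * N :=
              mul_le_mul_of_nonneg_right (hub x) (le_of_lt hNpos)
          _ = 1 := by field_simp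
      have hlog : Real.log (q x * N) ≤ 0 :=
        Real.log_nonpos (by positivity) h1
      have : 0 ≤ -Real.log (q x * N) := by linarith
      positivity
  have hge : Real.log N ≤ ent q := by
    have := Finset.sum_nonneg hfnn
    rw [hsumf] at this; linarith
  refine ⟨hge, ?_⟩
  constructor
  · intro heq
    have hzero : ∑ x, f x = 0 := by rw [hsumf, heq]; ring
    have hall := (Finset.sum_eq_zero_iff_of_nonneg hfnn).mp hzero
    intro x hx
    have hfx : f x = 0 := hall x (Finset.mem_univ x)
    rw [hform x hx] at hfx
    have hxpos : 0 < q x := lt_of_le_of_ne (hq0 x) (Ne.symm hx)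
    have : -Real.log (q x * N) = 0 := by
      rcases mul_eq_zero.mp hfx with h | h
      · exact absurd h hx
      · exact h
    have hlog0 : Real.log (q x * N) = 0 := by linarith
    rcases Real.log_eq_zero.mp hlog0 with h | h | h
    · exact absurd h (by positivity)
    · field_simp
      linarith [h]
    · nlinarith
  · intro hone
    have : ∀ x ∈ Finset.univ, f x = 0 := by
      intro x _
      by_cases hx : q x = 0
      · simp [hf, hx]
      · have hq : q x = 1 / N := hone x hx
        rw [hform x hx, hq]
        have : (1:ℝ) / N * N = 1 := by field_simp
        rw [this, Real.log_one]
        ring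
    have hzero : ∑ x, f x = 0 := Finset.sum_eq_zero this
    rw [hsumf] at hzero; linarith

open scoped Classical in
/-- In an error-free perfect secrecy system, `H(X) ≥ log |𝒰|`, with equality
iff `X` is uniform with mass `1/|𝒰|` on its support. -/
theorem stmt_2 {𝒰 ℛ 𝒳 : Type*} [Fintype 𝒰] [Fintype ℛ] [Fintype 𝒳]
    (p : 𝒰 → ℛ → 𝒳 → ℝ)
    (hnn : ∀ u r x, 0 ≤ p u r x)
    (hsum : ∑ u, ∑ r, ∑ x, p u r x = 1)
    (hIUX : ∀ u x, (∑ r, p u r x)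
      = (∑ r, ∑ x', p u r x') * (∑ u', ∑ r, p u' r x))
    (hIUR : ∀ u r, (∑ x, p u r x)
      = (∑ r', ∑ x, p u r' x) * (∑ u', ∑ x, p u' r x))
    (hdet : ∃ g : ℛ → 𝒳 → 𝒰, ∀ u r x, p u r x ≠ 0 → u = g r x) :
    Real.log ((univ.filter fun u => (∑ r, ∑ x, p u r x) ≠ 0).card)
        ≤ ent (fun x => ∑ u, ∑ r, p u r x)
      ∧ (ent (fun x => ∑ u, ∑ r, p u r x)
          = Real.log ((univ.filter fun u => (∑ r, ∑ x, p u r x) ≠ 0).card)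
        ↔ ∀ x, (∑ u, ∑ r, p u r x) ≠ 0 →
            (∑ u, ∑ r, p u r x)
              = 1 / ((univ.filter fun u => (∑ r, ∑ x, p u r x) ≠ 0).card : ℝ)) := by
  obtain ⟨g, hg⟩ := hdet
  set pU : 𝒰 → ℝ := fun u => ∑ r, ∑ x, p u r x with hpU
  set pX : 𝒳 → ℝ := fun x => ∑ u, ∑ r, p u r x with hpX
  set pR : ℛ → ℝ := fun r => ∑ u, ∑ x, p u r x with hpR
  set N : ℕ := (univ.filter fun u => pU u ≠ 0).card with hNdef
  -- nonnegativity
  have hpU0 : ∀ u, 0 ≤ pU u := fun u => Finset.sum_nonneg fun r _ =>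
    Finset.sum_nonneg fun x _ => hnn u r x
  have hpX0 : ∀ x, 0 ≤ pX x := fun x => Finset.sum_nonneg fun u _ =>
    Finset.sum_nonneg fun r _ => hnn u r x
  have hpR0 : ∀ r, 0 ≤ pR r := fun r => Finset.sum_nonneg fun u _ =>
    Finset.sum_nonneg fun x _ => hnn u r x
  -- marginal sums
  have hUsum : ∑ u, pU u = 1 := hsum
  have hXsum : ∑ x, pX x = 1 := by
    rw [← hsum]
    exact Finset.sum_comm.trans (Finset.sum_congr rfl fun u _ => Finset.sum_comm)
  have hRsum : ∑ r, pR r = 1 := by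
    rw [← hsum]
    exact (Finset.sum_comm).symm
  -- N ≥ 1
  have hN1 : 1 ≤ N := by
    by_contra h
    push_neg at h
    interval_cases N
    have hempty : (univ.filter fun u => pU u ≠ 0) = ∅ := Finset.card_eq_zero.mp (by omega)
    have : ∀ u, pU u = 0 := by
      intro u
      by_contra hu
      have : u ∈ (univ.filter fun u => pU u ≠ 0) := Finset.mem_filter.mpr ⟨Finset.mem_univ u, hu⟩
      simp [hempty] at this
    rw [Finset.sum_eq_zero (fun u _ => this u)] at hUsum
    norm_num at hUsum
  have hNpos : (0:ℝ) < N := by exact_mod_cast hN1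
  -- key bound : pX x ≤ 1 / N
  have hub : ∀ x, pX x ≤ 1 / N := by
    intro x
    -- per-u bound
    have hper : ∀ u, pU u ≠ 0 →
        pX x ≤ ∑ r ∈ univ.filter (fun r => g r x = u), pR r := by
      intro u hu
      have hupos : 0 < pU u := lt_of_le_of_ne (hpU0 u) (Ne.symm hu)
      have h1 : pU u * pX x = ∑ r, p u r x := (hIUX u x).symm
      have h2 : ∑ r, p u r x ≤ ∑ r, (if g r x = u then pU u * pR r else 0) := by
        apply Finset.sum_le_sum
        intro r _
        by_cases hp : p u r x = 0
        · rw [hp]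
          split
          · exact mul_nonneg (hpU0 u) (hpR0 r)
          · exact le_refl 0
        · have hgu : g r x = u := (hg u r x hp).symm
          rw [if_pos hgu]
          have : p u r x ≤ ∑ x', p u r x' :=
            Finset.single_le_sum (fun x' _ => hnn u r x') (Finset.mem_univ x)
          calc p u r x ≤ ∑ x', p u r x' := this
            _ = pU u * pR r := hIUR u r
      have h3 : ∑ r, (if g r x = u then pU u * pR r else 0)
          = pU u * ∑ r ∈ univ.filter (fun r => g r x = u), pR r := by
        rw [Finset.mul_sum, Finset.sum_filter]
      have : pU u * pX x ≤ pU u * ∑ r ∈ univ.filter (fun r => g r x = u), pR r := by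
        rw [h1]; rw [← h3]; exact h2
      exact le_of_mul_le_mul_left this hupos
    -- sum over u in support of U
    have hNmul : (N:ℝ) * pX x ≤ 1 := by
      have hdisj : (↑(univ.filter fun u => pU u ≠ 0) : Set 𝒰).PairwiseDisjoint
          (fun u => univ.filter (fun r => g r x = u)) := by
        intro u _ v _ huv
        simp only [Finset.disjoint_left]
        intro r hr hr'
        simp only [Finset.mem_filter] at hr hr'
        exact huv (hr.2 ▸ hr'.2.symm ▸ rfl)
      calc (N:ℝ) * pX x = ∑ u ∈ univ.filter (fun u => pU u ≠ 0), pX x := by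
            rw [Finset.sum_const, nsmul_eq_mul]
        _ ≤ ∑ u ∈ univ.filter (fun u => pU u ≠ 0),
              ∑ r ∈ univ.filter (fun r => g r x = u), pR r := by
            apply Finset.sum_le_sum
            intro u hu
            exact hper u (Finset.mem_filter.mp hu).2
        _ = ∑ r ∈ (univ.filter fun u => pU u ≠ 0).biUnion
              (fun u => univ.filter (fun r => g r x = u)), pR r :=
            (Finset.sum_biUnion hdisj).symm
        _ ≤ ∑ r, pR r := by
            apply Finset.sum_le_sum_of_subset_of_nonneg (Finset.subset_univ _)
            intro r _ _
            exact hpR0 r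
        _ = 1 := hRsum
    rw [le_div_iff₀ hNpos, mul_comm]
    exact hNmul
  exact ent_ge_log_aux pX N hN1 hpX0 hXsum hub
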